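/- Let A be a semiring, N an additive spine of A, and R = M_n(A) the semiring of n×n matrices over A. Then the set M = ⋃_{i=1}^n N·e_{ii} of diagonal matrices with a single entry from N is an additive spine of R. -/

import Mathlib

def halo (R : Type*) {V : Type*} [Semiring R] [AddCommMonoid V] [Module R V]
    (S : Set V) : Set V :=
  {v | ∃ l m : R, l • v ∈ S ∧ m • (l • v) = v}

def IsAdditiveSpine (R : Type*) {V : Type*} [Semiring R] [AddCommMonoid V] [Module R V]
    (S : Set V) : Prop :=
  AddSubmonoid.closure (halo R S) = ⊤

theorem matrix_spine {A : Type*} [Semiring A] (N : Set A)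
    (hN : IsAdditiveSpine A N) (n : ℕ) :
    IsAdditiveSpine (Matrix (Fin n) (Fin n) A)
      (⋃ i : Fin n, (fun a : A => Matrix.single i i a) '' N) := by
  set S : Set (Matrix (Fin n) (Fin n) A) :=
    ⋃ i : Fin n, (fun a : A => Matrix.single i i a) '' N
  rw [IsAdditiveSpine, eq_top_iff]
  intro X _
  rw [Matrix.matrix_eq_sum_single X]
  apply AddSubmonoid.sum_mem
  intro i _
  apply AddSubmonoid.sum_mem
  intro j _
  -- show stdBasisMatrix i j a ∈ closure for any a
  have key : ∀ a : A, Matrix.single i j a ∈ AddSubmonoid.closure (halo (Matrix (Fin n) (Fin n) A) S) := by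
    intro a
    have ha : a ∈ AddSubmonoid.closure (halo A N) := by rw [hN]; trivial
    induction ha using AddSubmonoid.closure_induction with
    | mem x hx =>
      apply AddSubmonoid.subset_closure
      obtain ⟨l, m, h1, h2⟩ := hx
      refine ⟨Matrix.single j i l, Matrix.single i j m, ?_, ?_⟩
      · rw [smul_eq_mul, Matrix.single_mul_single_same]
        exact Set.mem_iUnion.2 ⟨j, ⟨l * x, h1, rfl⟩⟩
      · rw [smul_eq_mul, smul_eq_mul, Matrix.single_mul_single_same,
          Matrix.single_mul_single_same]
        
        rw [show m * (l * x) = x from h2]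
    | zero =>
      rw [Matrix.single_zero]
      exact AddSubmonoid.zero_mem _
    | add x y _ _ hx hy =>
      rw [Matrix.single_add]
      exact AddSubmonoid.add_mem _ hx hy
  exact key (X i j)
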